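/- arXiv:2312.17618 — 4 statements merged into one kernel-verified Lean document; each statement's English description precedes it below -/
import Mathlib

section
/- Let T : E → E be a bounded A-linear operator, ξ a real number, and {f_k}_{k∈ℕ} a sequence in E such that for every f ∈ E the series ∑_k ⟨f,f_k⟩·f_k converges in E and ∑_k ⟨f,f_k⟩·f_k = T f + ξ·f. Then {f_k}_{k∈ℕ} is a Bessel sequence with bound ‖T‖ + |ξ|, i.e. ‖∑_k ⟨f,f_k⟩⟨f_k,f⟩‖ ≤ (‖T‖ + |ξ|)·‖⟨f,f⟩‖ for all f ∈ E. -/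
open scoped RightActions

/-- The definition of `CStarModule` as it stood in Mathlib of December 2024 (right action of
`Aᵐᵒᵖ`, inner product `A`-linear on the right: `⟪x, y <• a⟫ = ⟪x, y⟫ * a`). -/
class CStarModuleRight (A E : Type*) [NonUnitalSemiring A] [StarRing A] [Module ℂ A]
    [AddCommGroup E] [Module ℂ E] [PartialOrder A] [SMul Aᵐᵒᵖ E] [Norm A] [Norm E]
    extends Inner A E where
  inner_add_right {x} {y} {z} : inner x (y + z) = inner x y + inner x z
  inner_self_nonneg {x} : 0 ≤ inner x x
  inner_self {x} : inner x x = 0 ↔ x = 0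
  inner_op_smul_right {a : A} {x y : E} : inner x (y <• a) = inner x y * a
  inner_smul_right_complex {z : ℂ} {x} {y} : inner x (z • y) = z • inner x y
  star_inner x y : star (inner x y) = inner y x
  norm_eq_sqrt_norm_inner_self x : ‖x‖ = Real.sqrt ‖inner x x‖

/-- Let `T : E → E` be a bounded `A`-linear operator on a Hilbert C⋆-module `E` over a
unital C⋆-algebra `A`, let `ξ` be a real number, and let `{f k}_{k ∈ ℕ}` be a sequence
in `E` such that for every `f ∈ E` the series `∑ₖ ⟨f, f k⟩ · f k` converges and equals
`T f + ξ • f`.  Then `{f k}` is a Bessel sequence with bound `‖T‖ + |ξ|`, i.e.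
`‖∑ₖ ⟨f, f k⟩⟨f k, f⟩‖ ≤ (‖T‖ + |ξ|) * ‖⟨f, f⟩‖` for all `f`. -/
theorem bessel_of_frame_operator_eq_bounded_plus_scalar
    {A E : Type*} [CStarAlgebra A] [PartialOrder A] [StarOrderedRing A]
    [NormedAddCommGroup E] [NormedSpace ℂ E] [SMul Aᵐᵒᵖ E] [CStarModuleRight A E]
    -- `T` is a bounded `A`-linear operator:
    (T : E →L[ℂ] E) (hTA : ∀ (a : A) (x : E), T (x <• a) = (T x) <• a)
    (ξ : ℝ) (f : ℕ → E)
    -- `∑ₖ ⟨f, f k⟩ · f k = T g + ξ • g` for every `g`: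
    (hsum : ∀ g : E, HasSum (fun k => (f k) <• (inner A (f k) g : A)) (T g + ξ • g)) :
    ∀ g : E, Summable (fun k => (inner A g (f k) : A) * inner A (f k) g) ∧
      ‖∑' k, (inner A g (f k) : A) * inner A (f k) g‖ ≤ (‖T‖ + |ξ|) * ‖(inner A g g : A)‖ := by
  intro g
  letI : CStarModule Aᵐᵒᵖ E :=
    { inner := fun x y => MulOpposite.op (inner A x y)
      inner_add_right := by
        intro x y z
        rw [CStarModuleRight.inner_add_right, MulOpposite.op_add]
      inner_self_nonneg := by
        intro x
        exact MulOpposite.op_nonneg.mpr CStarModuleRight.inner_self_nonneg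
      inner_self := by
        intro x
        rw [MulOpposite.op_eq_zero_iff]
        exact CStarModuleRight.inner_self
      inner_op_smul_right := by
        intro a x y
        have := CStarModuleRight.inner_op_smul_right (A := A) (a := a.unop) (x := x) (y := y)
        simp only [MulOpposite.op_unop] at this
        rw [this, MulOpposite.op_mul, MulOpposite.op_unop]
      inner_smul_right_complex := by
        intro z x y
        rw [CStarModuleRight.inner_smul_right_complex, MulOpposite.op_smul]
      star_inner := by
        intro x y
        rw [← MulOpposite.op_star, CStarModuleRight.star_inner]
      norm_eq_sqrt_norm_inner_self := by
        intro x
        rw [MulOpposite.norm_op]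
        exact CStarModuleRight.norm_eq_sqrt_norm_inner_self x }
  have hsr : inner A g (ξ • g) = ξ • (inner A g g : A) := by
    rw [← Complex.coe_smul, CStarModuleRight.inner_smul_right_complex, Complex.coe_smul]
  have key : HasSum (fun k => (inner A g (f k) : A) * inner A (f k) g)
      ((inner A g (T g) : A) + ξ • (inner A g g : A)) := by
    have h := ((hsum g).mapL (CStarModule.innerSL (A := Aᵐᵒᵖ) g)).unop
    have h2 : ∀ y, (CStarModule.innerSL (A := Aᵐᵒᵖ) g y).unop = inner A g y := fun y => rfl
    simp only [h2, CStarModuleRight.inner_op_smul_right, CStarModuleRight.inner_add_right,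
      hsr] at h
    exact h
  refine ⟨key.summable, ?_⟩
  rw [key.tsum_eq]
  have h1 : ‖(inner A g (T g) : A)‖ ≤ ‖T‖ * ‖(inner A g g : A)‖ := by
    calc ‖(inner A g (T g) : A)‖ ≤ ‖g‖ * ‖T g‖ := by
          rw [← MulOpposite.norm_op]; exact CStarModule.norm_inner_le E (A := Aᵐᵒᵖ)
      _ ≤ ‖g‖ * (‖T‖ * ‖g‖) := by gcongr; exact T.le_opNorm g
      _ = ‖T‖ * ‖g‖ ^ 2 := by ring
      _ = ‖T‖ * ‖(inner A g g : A)‖ := by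
          rw [CStarModuleRight.norm_eq_sqrt_norm_inner_self (A := A) g,
            Real.sq_sqrt (norm_nonneg _)]
  calc ‖(inner A g (T g) : A) + ξ • (inner A g g : A)‖
      ≤ ‖(inner A g (T g) : A)‖ + ‖ξ • (inner A g g : A)‖ := norm_add_le _ _
    _ ≤ ‖T‖ * ‖(inner A g g : A)‖ + |ξ| * ‖(inner A g g : A)‖ := by
        rw [norm_smul, Real.norm_eq_abs]; gcongr
    _ = (‖T‖ + |ξ|) * ‖(inner A g g : A)‖ := by ring
end

section
/- Let T : E → E be a bounded A-linear operator that is self-adjoint (⟨T f, g⟩ = ⟨f, T g⟩ for all f, g ∈ E) and bounded below by ρ > 0 (‖T f‖ ≥ ρ‖f‖ for all f), let ξ be a real number and η ≥ 0, and assume ‖T f‖·‖f‖ ≤ √(1+η²)·‖⟨T f, f⟩‖ for every f ∈ E. Let {f_k}_{k∈ℕ} be a sequence in E with ∑_k ⟨f,f_k⟩·f_k = T f + ξ·f for every f ∈ E, and suppose √(ρ²/(1+η²)) − |ξ| > 0. Then the lower norm-frame inequality holds: ‖∑_k ⟨f,f_k⟩⟨f_k,f⟩‖ ≥ (√(ρ²/(1+η²))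 − |ξ|)·‖⟨f,f⟩‖ for every f ∈ E. -/
open scoped RightActions

namespace CStarModuleRight

section helpers

variable {A E : Type*} [CStarAlgebra A] [PartialOrder A] [StarOrderedRing A]
    [NormedAddCommGroup E] [Module ℂ E] [SMul Aᵐᵒᵖ E] [CStarModuleRight A E]

lemma inner_add_left' {x y z : E} : inner A (x + y) z = inner A x z + inner A y z := by
  rw [← star_star (r := inner A (x + y) z)]
  simp only [inner_add_right, star_add, star_inner]

lemma inner_sub_right' {x y z : E} : inner A x (y - z) = inner A x y - inner A x z :=
  (AddMonoidHom.mk' (fun y : E => inner A x y) (fun _ _ => inner_add_right)).map_sub y z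

lemma inner_sub_left' {x y z : E} : inner A (x - y) z = inner A x z - inner A y z :=
  (AddMonoidHom.mk' (fun x : E => inner A x z) (fun _ _ => inner_add_left')).map_sub x y

lemma inner_zero_right' {x : E} : inner A x (0 : E) = 0 :=
  (AddMonoidHom.mk' (fun y : E => inner A x y) (fun _ _ => inner_add_right)).map_zero

lemma inner_zero_left' {x : E} : inner A (0 : E) x = 0 := by
  rw [← star_inner x 0, inner_zero_right', star_zero]

lemma inner_op_smul_left' {a : A} {x y : E} : inner A (x <• a) y = star a * inner A x y := by
  rw [← star_inner y (x <• a), inner_op_smul_right, star_mul, star_inner]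

lemma inner_smul_right_real' {r : ℝ} {x y : E} : inner A x (r • y) = r • inner A x y := by
  have h₁ : r • y = (r : ℂ) • y := by simp
  rw [h₁, inner_smul_right_complex]
  simp

lemma inner_smul_left_real' {r : ℝ} {x y : E} : inner A (r • x) y = r • inner A x y := by
  rw [← star_inner y (r • x), inner_smul_right_real', star_smul, star_inner]
  simp

lemma norm_sq_eq' {x : E} : ‖x‖ ^ 2 = ‖(inner A x x : A)‖ := by
  rw [norm_eq_sqrt_norm_inner_self (A := A) x, Real.sq_sqrt (norm_nonneg _)]

lemma inner_mul_inner_swap_le' {x y : E} :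
    inner A y x * inner A x y ≤ ‖x‖ ^ 2 • (inner A y y : A) := by
  rcases eq_or_ne x 0 with h | h
  · simp [h, inner_zero_left', inner_zero_right']
  · have h₁ : ∀ (a : A),
        (0 : A) ≤ ‖x‖ ^ 2 • (star a * a) - ‖x‖ ^ 2 • (inner A y x * a)
                  - ‖x‖ ^ 2 • (star a * inner A x y)
                  + ‖x‖ ^ 2 • (‖x‖ ^ 2 • (inner A y y : A)) := fun a => by
      calc (0 : A) ≤ inner A (x <• a - ‖x‖ ^ 2 • y) (x <• a - ‖x‖ ^ 2 • y) := by
                      exact inner_self_nonneg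
            _ = star a * inner A x x * a - ‖x‖ ^ 2 • (inner A y x * a)
                  - ‖x‖ ^ 2 • (star a * inner A x y)
                  + ‖x‖ ^ 2 • (‖x‖ ^ 2 • (inner A y y : A)) := by
                      simp only [inner_sub_right', inner_op_smul_right, inner_sub_left',
                        inner_op_smul_left', inner_smul_left_real', smul_mul_assoc,
                        mul_smul_comm, inner_smul_right_real', smul_sub, sub_mul, mul_assoc]
                      abel
            _ ≤ ‖x‖ ^ 2 • (star a * a) - ‖x‖ ^ 2 • (inner A y x * a)
                  - ‖x‖ ^ 2 • (star a * inner A x y)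
                  + ‖x‖ ^ 2 • (‖x‖ ^ 2 • (inner A y y : A)) := by
                      gcongr
                      calc _ ≤ ‖(inner A x x : A)‖ • (star a * a) :=
                          CStarAlgebra.star_left_conjugate_le_norm_smul
                            (IsSelfAdjoint.of_nonneg inner_self_nonneg)
                        _ = ‖x‖ ^ 2 • (star a * a) := by rw [norm_sq_eq' (A := A)]
    specialize h₁ (inner A x y)
    simp only [star_inner, sub_self, zero_sub, le_neg_add_iff_add_le, add_zero] at h₁
    rwa [smul_le_smul_iff_of_pos_left (pow_pos (norm_pos_iff.mpr h) _)] at h₁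

lemma norm_inner_le' {x y : E} : ‖(inner A x y : A)‖ ≤ ‖x‖ * ‖y‖ := by
  have := calc ‖(inner A x y : A)‖ ^ 2 = ‖inner A y x * inner A x y‖ := by
                rw [← star_inner x y, CStarRing.norm_star_mul_self, pow_two]
    _ ≤ ‖‖x‖ ^ 2 • (inner A y y : A)‖ := by
                refine CStarAlgebra.norm_le_norm_of_nonneg_of_le ?_ inner_mul_inner_swap_le'
                rw [← star_inner x y]
                exact star_mul_self_nonneg _
    _ = ‖x‖ ^ 2 * ‖(inner A y y : A)‖ := by simp [norm_smul]
    _ = ‖x‖ ^ 2 * ‖y‖ ^ 2 := by rw [norm_sq_eq' (A := A) (x := y)]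
    _ = (‖x‖ * ‖y‖) ^ 2 := by simp only [mul_pow]
  exact (pow_le_pow_iff_left₀ (norm_nonneg _) (by positivity) (by simp)).mp this

end helpers

end CStarModuleRight

/-- Let `T : E → E` be a bounded `A`-linear operator on a Hilbert C⋆-module `E` over a
unital C⋆-algebra `A`, self-adjoint and bounded below by `ρ > 0`, let `ξ` be a real
number and `η ≥ 0`, and assume `‖T f‖ * ‖f‖ ≤ √(1 + η²) * ‖⟨T f, f⟩‖` for every `f`.
Let `{f k}` be a sequence in `E` with `∑ₖ ⟨f, f k⟩ · f k = T f + ξ • f` for every `f`,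
and suppose `√(ρ² / (1 + η²)) − |ξ| > 0`.  Then the lower norm-frame inequality holds:
`‖∑ₖ ⟨f, f k⟩⟨f k, f⟩‖ ≥ (√(ρ² / (1 + η²)) − |ξ|) * ‖⟨f, f⟩‖` for every `f`. -/
theorem lower_frame_inequality_of_bounded_below
    {A E : Type*} [CStarAlgebra A] [PartialOrder A] [StarOrderedRing A]
    [NormedAddCommGroup E] [Module ℂ E] [SMul Aᵐᵒᵖ E] [CStarModuleRight A E]
    -- `T` is a bounded `A`-linear operator:
    (T : E →L[ℂ] E) (hTA : ∀ (a : A) (x : E), T (x <• a) = (T x) <• a)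
    -- `T` is self-adjoint:
    (hTsa : ∀ x y : E, (inner A (T x) y : A) = inner A x (T y))
    -- `T` is bounded below by `ρ > 0`:
    (ρ : ℝ) (hρ : 0 < ρ) (hTbelow : ∀ x : E, ρ * ‖x‖ ≤ ‖T x‖)
    (ξ η : ℝ) (hη : 0 ≤ η)
    -- the angle-type hypothesis `‖T f‖‖f‖ ≤ √(1 + η²) ‖⟨T f, f⟩‖`:
    (hangle : ∀ x : E, ‖T x‖ * ‖x‖ ≤ Real.sqrt (1 + η ^ 2) * ‖(inner A x (T x) : A)‖)
    (f : ℕ → E)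
    -- `∑ₖ ⟨g, f k⟩ · f k = T g + ξ • g` for every `g`:
    (hsum : ∀ g : E, HasSum (fun k => (f k) <• (inner A (f k) g : A)) (T g + ξ • g))
    (hpos : 0 < Real.sqrt (ρ ^ 2 / (1 + η ^ 2)) - |ξ|) :
    ∀ g : E,
      (Real.sqrt (ρ ^ 2 / (1 + η ^ 2)) - |ξ|) * ‖(inner A g g : A)‖ ≤
        ‖∑' k, (inner A g (f k) : A) * inner A (f k) g‖ := by
  intro g
  have hsq : (0:ℝ) < 1 + η ^ 2 := by positivity
  have hsqrt : (0:ℝ) < Real.sqrt (1 + η ^ 2) := Real.sqrt_pos.2 hsq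
  -- continuity of x ↦ ⟪g, x⟫
  have hcont : Continuous (fun x : E => inner A g x) := by
    refine (LipschitzWith.of_dist_le_mul (K := ‖g‖₊) fun x y => ?_).continuous
    rw [dist_eq_norm, dist_eq_norm, ← CStarModuleRight.inner_sub_right']
    exact CStarModuleRight.norm_inner_le'
  have hlin : HasSum (fun k => inner A g (f k) * inner A (f k) g)
      (inner A g (T g) + ξ • inner A g g) := by
    have := (hsum g).map
      (AddMonoidHom.mk' (fun x : E => inner A g x)
        (fun a b => CStarModuleRight.inner_add_right)) hcont
    simpa [Function.comp_def, CStarModuleRight.inner_op_smul_right, CStarModuleRight.inner_add_right,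
      CStarModuleRight.inner_smul_right_real'] using this
  rw [hlin.tsum_eq]
  have hnormsq : ‖(inner A g g : A)‖ = ‖g‖ ^ 2 := (CStarModuleRight.norm_sq_eq' (A := A)).symm
  have h1 : Real.sqrt (ρ ^ 2 / (1 + η ^ 2)) * ‖(inner A g g : A)‖ ≤
      ‖(inner A g (T g) : A)‖ := by
    have hc : Real.sqrt (ρ ^ 2 / (1 + η ^ 2)) = ρ / Real.sqrt (1 + η ^ 2) := by
      rw [Real.sqrt_div (by positivity), Real.sqrt_sq hρ.le]
    have key : ρ * ‖g‖ * ‖g‖ ≤ Real.sqrt (1 + η ^ 2) * ‖(inner A g (T g) : A)‖ :=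
      le_trans (by nlinarith [hTbelow g, norm_nonneg g]) (hangle g)
    rw [hc, hnormsq, div_mul_eq_mul_div, div_le_iff₀ hsqrt]
    nlinarith [key]
  have h2 : ‖(inner A g (T g) : A) + ξ • (inner A g g : A)‖ ≥
      ‖(inner A g (T g) : A)‖ - |ξ| * ‖(inner A g g : A)‖ := by
    calc ‖(inner A g (T g) : A)‖ - |ξ| * ‖(inner A g g : A)‖
        = ‖(inner A g (T g) : A)‖ - ‖ξ • (inner A g g : A)‖ := by
          rw [norm_smul, Real.norm_eq_abs]
      _ ≤ _ := by
          have := norm_sub_norm_le ((inner A g (T g) : A)) (-(ξ • (inner A g g : A)))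
          simpa [sub_neg_eq_add] using this
  nlinarith [norm_nonneg (inner A g g : A)]
end

section
/- Let {f_k}_{k∈ℕ} be a frame for H with bounds A and B, let {g_k}_{k∈ℕ} be a Bessel sequence in H, and suppose that for some μ > 0 one has (∑_k |⟨f, f_k⟩ − ⟨f, g_k⟩|²)^{1/2} ≤ μ‖f‖ for every f ∈ H (i.e., {g_k} is a μ-perturbation of {f_k}). If μ < √A, then {g_k}_{k∈ℕ} is a frame for H with bounds (√A − μ)² and (μ + √B)². -/
private lemma lp_sqrt_norm {α β γ : ℕ → ℂ}
    (hα : Summable (fun k => ‖α k‖ ^ 2)) (hβ : Summable (fun k => ‖β k‖ ^ 2))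
    (hγ : Summable (fun k => ‖γ k‖ ^ 2)) (hd : ∀ k, γ k = α k - β k) :
    |Real.sqrt (∑' k, ‖α k‖ ^ 2) - Real.sqrt (∑' k, ‖β k‖ ^ 2)|
      ≤ Real.sqrt (∑' k, ‖γ k‖ ^ 2) := by
  have h2 : (0:ℝ) < (2 : ENNReal).toReal := by norm_num
  have mα : Memℓp α 2 := memℓp_gen (by simpa using hα)
  have mβ : Memℓp β 2 := memℓp_gen (by simpa using hβ)
  set F : lp (fun _ : ℕ => ℂ) 2 := ⟨α, mα⟩
  set G : lp (fun _ : ℕ => ℂ) 2 := ⟨β, mβ⟩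
  have hnorm : ∀ (h : lp (fun _ : ℕ => ℂ) 2),
      ‖h‖ = Real.sqrt (∑' k, ‖h k‖ ^ 2) := by
    intro h
    rw [lp.norm_eq_tsum_rpow h2 h, Real.sqrt_eq_rpow]
    norm_num
  have hFG : ∀ k, (F - G) k = γ k := by
    intro k; simp [F, G, hd k]; rfl
  have tri := abs_norm_sub_norm_le F G
  rw [hnorm F, hnorm G, hnorm (F - G)] at tri
  have : (∑' k, ‖(F - G) k‖ ^ 2) = ∑' k, ‖γ k‖ ^ 2 := by
    exact tsum_congr fun k => by rw [hFG k]
  rw [this] at tri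
  simpa [F, G] using tri

/-- Let `{f k}` be a frame for a complex Hilbert space `H` with bounds `A` and `B`, let
`{g k}` be a Bessel sequence in `H`, and suppose that for some `μ > 0` one has
`(∑ₖ |⟨x, f k⟩ − ⟨x, g k⟩|²)^{1/2} ≤ μ‖x‖` for every `x` (i.e. `{g k}` is a
`μ`-perturbation of `{f k}`).  If `μ < √A`, then `{g k}` is a frame for `H` with
bounds `(√A − μ)²` and `(μ + √B)²`. -/
theorem perturbation_of_frame_is_frame
    {H : Type*} [NormedAddCommGroup H] [InnerProductSpace ℂ H] [CompleteSpace H]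
    (f g : ℕ → H) (A B : ℝ) (hA : 0 < A) (hAB : A ≤ B)
    -- `{f k}` is a frame with bounds `A` and `B`:
    (hfsum : ∀ x : H, Summable (fun k => ‖(inner ℂ x (f k) : ℂ)‖ ^ 2))
    (hflow : ∀ x : H, A * ‖x‖ ^ 2 ≤ ∑' k, ‖(inner ℂ x (f k) : ℂ)‖ ^ 2)
    (hfup : ∀ x : H, ∑' k, ‖(inner ℂ x (f k) : ℂ)‖ ^ 2 ≤ B * ‖x‖ ^ 2)
    -- `{g k}` is a Bessel sequence:
    (B' : ℝ) (hB' : 0 < B')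
    (hgsum : ∀ x : H, Summable (fun k => ‖(inner ℂ x (g k) : ℂ)‖ ^ 2))
    (hgB : ∀ x : H, ∑' k, ‖(inner ℂ x (g k) : ℂ)‖ ^ 2 ≤ B' * ‖x‖ ^ 2)
    -- `{g k}` is a `μ`-perturbation of `{f k}`:
    (μ : ℝ) (hμ : 0 < μ)
    (hpertsum : ∀ x : H, Summable (fun k => ‖(inner ℂ x (f k) : ℂ) - inner ℂ x (g k)‖ ^ 2))
    (hpert : ∀ x : H,
      Real.sqrt (∑' k, ‖(inner ℂ x (f k) : ℂ) - inner ℂ x (g k)‖ ^ 2) ≤ μ * ‖x‖)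
    (hμA : μ < Real.sqrt A) :
    ∀ x : H, (Real.sqrt A - μ) ^ 2 * ‖x‖ ^ 2 ≤ ∑' k, ‖(inner ℂ x (g k) : ℂ)‖ ^ 2 ∧
      ∑' k, ‖(inner ℂ x (g k) : ℂ)‖ ^ 2 ≤ (μ + Real.sqrt B) ^ 2 * ‖x‖ ^ 2 := by
  intro x
  set sf := Real.sqrt (∑' k, ‖(inner ℂ x (f k) : ℂ)‖ ^ 2) with hsf
  set sg := Real.sqrt (∑' k, ‖(inner ℂ x (g k) : ℂ)‖ ^ 2) with hsg
  set d := Real.sqrt (∑' k, ‖(inner ℂ x (f k) : ℂ) - inner ℂ x (g k)‖ ^ 2) with hd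
  have hsgnn : 0 ≤ sg := Real.sqrt_nonneg _
  have hsfnn : 0 ≤ sf := Real.sqrt_nonneg _
  have htsumg : ∑' k, ‖(inner ℂ x (g k) : ℂ)‖ ^ 2 = sg ^ 2 := by
    rw [hsg, Real.sq_sqrt]
    exact tsum_nonneg fun k => sq_nonneg _
  have htri : |sf - sg| ≤ d :=
    lp_sqrt_norm (hfsum x) (hgsum x) (hpertsum x) (fun k => rfl)
  have hdμ : d ≤ μ * ‖x‖ := hpert x
  have hsfA : Real.sqrt A * ‖x‖ ≤ sf := by
    rw [hsf]
    calc Real.sqrt A * ‖x‖ = Real.sqrt (A * ‖x‖ ^ 2) := by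
          rw [Real.sqrt_mul hA.le, Real.sqrt_sq (norm_nonneg x)]
      _ ≤ _ := Real.sqrt_le_sqrt (hflow x)
  have hsfB : sf ≤ Real.sqrt B * ‖x‖ := by
    rw [hsf]
    calc Real.sqrt _ ≤ Real.sqrt (B * ‖x‖ ^ 2) := Real.sqrt_le_sqrt (hfup x)
      _ = Real.sqrt B * ‖x‖ := by rw [Real.sqrt_mul (hA.trans_le hAB).le,
            Real.sqrt_sq (norm_nonneg x)]
  have h1 : (Real.sqrt A - μ) * ‖x‖ ≤ sg := by
    have : sf - d ≤ sg := by
      have := (abs_le.mp htri).2; linarith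
    nlinarith [norm_nonneg x]
  have h2 : sg ≤ (μ + Real.sqrt B) * ‖x‖ := by
    have : sg ≤ sf + d := by
      have := (abs_le.mp htri).1; linarith
    nlinarith [norm_nonneg x]
  constructor
  · rw [htsumg]
    have hpos : 0 ≤ (Real.sqrt A - μ) * ‖x‖ := by
      have : 0 ≤ Real.sqrt A - μ := by linarith
      positivity
    calc (Real.sqrt A - μ) ^ 2 * ‖x‖ ^ 2 = ((Real.sqrt A - μ) * ‖x‖) ^ 2 := by ring
      _ ≤ sg ^ 2 := by nlinarith
  · rw [htsumg]
    calc sg ^ 2 ≤ ((μ + Real.sqrt B) * ‖x‖) ^ 2 := by nlinarith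
      _ = (μ + Real.sqrt B) ^ 2 * ‖x‖ ^ 2 := by ring
end

section
/- Let H be an infinite-dimensional complex Hilbert space, let {f_k}_{k∈ℕ} and {g_k}_{k∈ℕ} be frames for H whose frame operators satisfy S_F = K₁ + I and S_G = K₂ + I with K₁, K₂ compact operators, and suppose there is a subset σ ⊆ ℕ such that {f_k}_{k∈σ} and {g_k}_{k∈σᶜ} are each orthonormal (Hilbert) bases of H. Then the weaving {f_k}_{k∈σᶜ} ∪ {g_k}_{k∈σ} is not a frame for H: there is no constant C > 0 with C‖f‖² ≤ ∑_{k∈σᶜ} |⟨f,f_k⟩|² + ∑_{k∈σ} |⟨f,g_k⟩|² for all f ∈ H. In particular, {f_k}_{k∈ℕ} and {g_k}_{k∈ℕ} are not woven. -/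
/-- Let `H` be an infinite-dimensional complex Hilbert space, let `{f k}` and `{g k}` be
frames for `H` whose frame operators satisfy `S_F = K₁ + I` and `S_G = K₂ + I` with
`K₁, K₂` compact, and suppose there is a subset `σ ⊆ ℕ` such that `{f k}_{k ∈ σ}` and
`{g k}_{k ∈ σᶜ}` are each orthonormal (Hilbert) bases of `H`.  Then the weaving
`{f k}_{k ∈ σᶜ} ∪ {g k}_{k ∈ σ}` is not a frame for `H`: there is no constant `C > 0`
with `C‖x‖² ≤ ∑_{k ∈ σᶜ} |⟨x, f k⟩|² + ∑_{k ∈ σ} |⟨x, g k⟩|²` for all `x`.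
(In particular, `{f k}` and `{g k}` are not woven.) -/
theorem compact_tight_frames_not_woven
    {H : Type*} [NormedAddCommGroup H] [InnerProductSpace ℂ H] [CompleteSpace H]
    (hinf : ¬ FiniteDimensional ℂ H)
    (f g : ℕ → H) (A B C D : ℝ) (hA : 0 < A) (hAB : A ≤ B) (hC : 0 < C) (hCD : C ≤ D)
    -- `{f k}` is a frame with bounds `A` and `B`:
    (hfsum : ∀ x : H, Summable (fun k => ‖(inner ℂ (f k) x : ℂ)‖ ^ 2))
    (hflow : ∀ x : H, A * ‖x‖ ^ 2 ≤ ∑' k, ‖(inner ℂ (f k) x : ℂ)‖ ^ 2)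
    (hfup : ∀ x : H, ∑' k, ‖(inner ℂ (f k) x : ℂ)‖ ^ 2 ≤ B * ‖x‖ ^ 2)
    -- `{g k}` is a frame with bounds `C` and `D`:
    (hgsum : ∀ x : H, Summable (fun k => ‖(inner ℂ (g k) x : ℂ)‖ ^ 2))
    (hglow : ∀ x : H, C * ‖x‖ ^ 2 ≤ ∑' k, ‖(inner ℂ (g k) x : ℂ)‖ ^ 2)
    (hgup : ∀ x : H, ∑' k, ‖(inner ℂ (g k) x : ℂ)‖ ^ 2 ≤ D * ‖x‖ ^ 2)
    -- the frame operators satisfy `S_F = K₁ + I` and `S_G = K₂ + I`, `K₁, K₂` compact: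
    (K₁ K₂ : H →L[ℂ] H)
    (hK₁ : IsCompactOperator ⇑K₁) (hK₂ : IsCompactOperator ⇑K₂)
    (hSF : ∀ x : H, HasSum (fun k => (inner ℂ (f k) x : ℂ) • f k) (K₁ x + x))
    (hSG : ∀ x : H, HasSum (fun k => (inner ℂ (g k) x : ℂ) • g k) (K₂ x + x))
    -- `{f k}_{k ∈ σ}` and `{g k}_{k ∈ σᶜ}` are orthonormal bases:
    (σ : Set ℕ)
    (hfO : Orthonormal ℂ (fun k : σ => f ↑k))
    (hfT : ∀ x : H, HasSum (fun k : σ => (inner ℂ (f ↑k) x : ℂ) • f ↑k) x)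
    (hgO : Orthonormal ℂ (fun k : ↥σᶜ => g ↑k))
    (hgT : ∀ x : H, HasSum (fun k : ↥σᶜ => (inner ℂ (g ↑k) x : ℂ) • g ↑k) x) :
    -- the weaving `{f k}_{k ∈ σᶜ} ∪ {g k}_{k ∈ σ}` is not a frame:
    ¬ ∃ C₀ : ℝ, 0 < C₀ ∧ ∀ x : H,
      C₀ * ‖x‖ ^ 2 ≤ (∑' k : ↥σᶜ, ‖(inner ℂ (f ↑k) x : ℂ)‖ ^ 2) +
        ∑' k : ↥σ, ‖(inner ℂ (g ↑k) x : ℂ)‖ ^ 2 := by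
  rintro ⟨C₀, hC₀, hbound⟩
  set T : H →L[ℂ] H := K₁ + K₂ with hTdef
  have hT : IsCompactOperator ⇑T := by
    have := hK₁.add hK₂
    simpa [hTdef, ContinuousLinearMap.coe_add] using this
  -- σᶜ-part of the f-frame operator is K₁
  have hfc : ∀ x : H, HasSum (fun k : ↥σᶜ => (inner ℂ (f ↑k) x : ℂ) • f ↑k) (K₁ x) := by
    intro x
    set F : ℕ → H := fun k => (inner ℂ (f k) x : ℂ) • f k with hF
    have hsumm : Summable (F ∘ ((↑) : ↥σᶜ → ℕ)) := (hSF x).summable.subtype σᶜ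
    obtain ⟨b, hb⟩ := hsumm
    have hσ : HasSum (F ∘ ((↑) : ↥σ → ℕ)) x := hfT x
    have htot : HasSum F (x + b) := hσ.add_compl hb
    have : x + b = K₁ x + x := htot.unique (hSF x)
    have hbK : b = K₁ x := by
      have := this
      rw [add_comm x b] at this
      exact add_right_cancel this
    rwa [hbK] at hb
  -- σ-part of the g-frame operator is K₂
  have hgc : ∀ x : H, HasSum (fun k : ↥σ => (inner ℂ (g ↑k) x : ℂ) • g ↑k) (K₂ x) := by
    intro x
    set G : ℕ → H := fun k => (inner ℂ (g k) x : ℂ) • g k with hG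
    have hsumm : Summable (G ∘ ((↑) : ↥σ → ℕ)) := (hSG x).summable.subtype σ
    obtain ⟨b, hb⟩ := hsumm
    have hσc : HasSum (G ∘ ((↑) : ↥σᶜ → ℕ)) x := hgT x
    have htot : HasSum G (b + x) := hb.add_compl hσc
    have hbK : b = K₂ x := by
      have h2 : b + x = K₂ x + x := htot.unique (hSG x)
      exact add_right_cancel h2
    rwa [hbK] at hb
  -- tsum of squares over a subfamily equals re ⟪x, S x⟫
  have key : ∀ (x y : H) {ι : Type} (v : ι → H),
      HasSum (fun k => (inner ℂ (v k) x : ℂ) • v k) y →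
      (∑' k, ‖(inner ℂ (v k) x : ℂ)‖ ^ 2) = (inner ℂ x y : ℂ).re := by
    intro x y ι v hv
    have h1 : HasSum (fun k => (inner ℂ x ((inner ℂ (v k) x : ℂ) • v k) : ℂ)) (inner ℂ x y) :=
      (innerSL ℂ x).hasSum hv
    have h2 : HasSum (fun k => ((‖(inner ℂ (v k) x : ℂ)‖ ^ 2 : ℝ) : ℂ)) (inner ℂ x y) := by
      refine h1.congr_fun fun k => ?_
      rw [inner_smul_right, ← inner_conj_symm x (v k), RCLike.mul_conj]
      norm_cast
    have h3 := Complex.reCLM.hasSum h2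
    simp only [Complex.reCLM_apply, Complex.ofReal_re] at h3
    exact h3.tsum_eq
  -- the frame inequality gives C₀‖x‖ ≤ ‖T x‖
  have hTlow : ∀ x : H, C₀ * ‖x‖ ≤ ‖T x‖ := by
    intro x
    rcases eq_or_ne x 0 with rfl | hx
    · simp
    have h1 := hbound x
    rw [key x (K₁ x) (fun k : ↥σᶜ => f ↑k) (hfc x),
        key x (K₂ x) (fun k : ↥σ => g ↑k) (hgc x)] at h1
    have h2 : (inner ℂ x (K₁ x) : ℂ).re + (inner ℂ x (K₂ x) : ℂ).re = (inner ℂ x (T x) : ℂ).re := by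
      simp [hTdef, inner_add_right]
    rw [h2] at h1
    have h3 : (inner ℂ x (T x) : ℂ).re ≤ ‖x‖ * ‖T x‖ := by
      calc (inner ℂ x (T x) : ℂ).re ≤ ‖(inner ℂ x (T x) : ℂ)‖ := Complex.re_le_norm _
        _ ≤ ‖x‖ * ‖T x‖ := norm_inner_le_norm x (T x)
    have h4 : C₀ * ‖x‖ * ‖x‖ ≤ ‖T x‖ * ‖x‖ := by nlinarith [norm_nonneg x, norm_nonneg (T x)]
    have hx' : 0 < ‖x‖ := norm_pos_iff.mpr hx
    exact le_of_mul_le_mul_right h4 hx'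
  -- antilipschitz
  have hanti : AntilipschitzWith (⟨C₀, hC₀.le⟩ : NNReal)⁻¹ ⇑T := by
    apply ContinuousLinearMap.antilipschitz_of_bound
    intro x
    have h : ‖x‖ ≤ C₀⁻¹ * ‖T x‖ := by
      rw [le_inv_mul_iff₀ hC₀]
      exact hTlow x
    exact h
  obtain ⟨Kc, hKc, hnhds⟩ := hT
  rw [Metric.mem_nhds_iff] at hnhds
  obtain ⟨ε, hε, hball⟩ := hnhds
  have hce : Topology.IsClosedEmbedding ⇑T := hanti.isClosedEmbedding T.uniformContinuous
  have hpre : IsCompact (⇑T ⁻¹' Kc) := hce.isCompact_preimage hKc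
  have hcb : IsCompact (Metric.closedBall (0:H) (ε/2)) :=
    IsCompact.of_isClosed_subset hpre Metric.isClosed_closedBall
      ((Metric.closedBall_subset_ball (by linarith)).trans hball)
  exact hinf (FiniteDimensional.of_isCompact_closedBall₀ ℂ (by linarith) hcb)
end
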